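/- Let A ⊆ B be a non-degenerate C*-inclusion and M ⊆ B a slice. Then M is contained in A if and only if the closed linear span of {m·n : m, n ∈ M} equals M. Moreover, if the closed linear span of {m·n : m, n ∈ M} equals M, then M* = M and M is a closed two-sided ideal of A. -/

import Mathlib

open scoped MultiplierAlgebra

noncomputable section

namespace NCCartan

variable {B : Type*} [NonUnitalCStarAlgebra B] [PartialOrder B] [StarOrderedRing B]

/-- A closed two-sided ideal of the C*-subalgebra of `B` with carrier `A`. -/
structure CIdealIn (A : Set B) where
  carrier : Set B
  subset : carrier ⊆ A
  zero_mem : (0 : B) ∈ carrier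
  add_mem : ∀ x ∈ carrier, ∀ y ∈ carrier, x + y ∈ carrier
  smul_mem : ∀ (c : ℂ), ∀ x ∈ carrier, c • x ∈ carrier
  mul_left : ∀ a ∈ A, ∀ x ∈ carrier, a * x ∈ carrier
  mul_right : ∀ a ∈ A, ∀ x ∈ carrier, x * a ∈ carrier
  isClosed : IsClosed carrier

/-- The inclusion `A ⊆ B` is non-degenerate: the closed linear span of `A·B` is all of `B`. -/
def Nondegenerate (A : Set B) : Prop :=
  Dense ((Submodule.span ℂ {x : B | ∃ a ∈ A, ∃ b : B, x = a * b} : Submodule ℂ B) : Set B)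

/-- `b` is a normaliser of `A` in `B`. -/
def IsNormalizerOf (A : Set B) (b : B) : Prop :=
  (∀ a ∈ A, b * a * star b ∈ A) ∧ (∀ a ∈ A, star b * a * b ∈ A)

/-- The inclusion `A ⊆ B` is regular: it is non-degenerate and the linear span of the
normalisers is dense in `B`. -/
def RegularInclusion (A : Set B) : Prop :=
  Nondegenerate A ∧
    Dense ((Submodule.span ℂ {b : B | IsNormalizerOf A b} : Submodule ℂ B) : Set B)

/-- A conditional expectation from `B` onto the C*-subalgebra with carrier `A`. -/
structure CondExp (A : Set B) where
  toFun : B →ₗ[ℂ] B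
  mem_range : ∀ b : B, toFun b ∈ A
  fixes : ∀ a ∈ A, toFun a = a
  contractive : ∀ b : B, ‖toFun b‖ ≤ ‖b‖
  positive : ∀ b : B, 0 ≤ b → 0 ≤ toFun b
  bimodule : ∀ a ∈ A, ∀ c ∈ A, ∀ b : B, toFun (a * b * c) = a * toFun b * c

/-- `E` is faithful: `E(b* b) = 0` implies `b = 0`. -/
def CondExp.Faithful {A : Set B} (E : CondExp A) : Prop :=
  ∀ b : B, E.toFun (star b * b) = 0 → b = 0

/-- `E` is almost faithful: `E((b c)* (b c)) = 0` for all `c` implies `b = 0`. -/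
def CondExp.AlmostFaithful {A : Set B} (E : CondExp A) : Prop :=
  ∀ b : B, (∀ c : B, E.toFun (star (b * c) * (b * c)) = 0) → b = 0

/-- The set `IBI`: the closed linear span of `{x b y : x, y ∈ I, b ∈ B}`. -/
def IBISet (I : Set B) : Set B :=
  closure ((Submodule.span ℂ {z : B | ∃ p ∈ I, ∃ b : B, ∃ q ∈ I, z = p * b * q} :
    Submodule ℂ B) : Set B)

/-- A conditional expectation from the C*-subalgebra of `B` with carrier `C` onto the
ideal with carrier `I ⊆ C`; only the values of `toFun` on `C` are relevant. -/
structure CondExpOnSub (C : Set B) (I : Set B) where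
  toFun : B → B
  map_add : ∀ x ∈ C, ∀ y ∈ C, toFun (x + y) = toFun x + toFun y
  map_smul : ∀ (c : ℂ), ∀ x ∈ C, toFun (c • x) = c • toFun x
  mem_range : ∀ x ∈ C, toFun x ∈ I
  fixes : ∀ x ∈ I, toFun x = x
  contractive : ∀ x ∈ C, ‖toFun x‖ ≤ ‖x‖
  positive : ∀ x ∈ C, 0 ≤ x → 0 ≤ toFun x
  bimodule : ∀ p ∈ I, ∀ q ∈ I, ∀ b ∈ C, toFun (p * b * q) = p * toFun b * q

def CondExpOnSub.Faithful {C I : Set B} (P : CondExpOnSub C I) : Prop :=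
  ∀ x ∈ C, P.toFun (star x * x) = 0 → x = 0

def CondExpOnSub.AlmostFaithful {C I : Set B} (P : CondExpOnSub C I) : Prop :=
  ∀ x ∈ C, (∀ c ∈ C, P.toFun (star (x * c) * (x * c)) = 0) → x = 0

/-- A virtual commutant of `A` in `B` defined on the ideal with carrier `I`;
only the values of `toFun` on `I` are relevant. -/
structure VirtualCommutant (A : Set B) (I : Set B) where
  toFun : B → B
  map_add : ∀ x ∈ I, ∀ y ∈ I, toFun (x + y) = toFun x + toFun y
  map_smul : ∀ (c : ℂ), ∀ x ∈ I, toFun (c • x) = c • toFun x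
  left_mod : ∀ a ∈ A, ∀ x ∈ I, toFun (a * x) = a * toFun x
  right_mod : ∀ a ∈ A, ∀ x ∈ I, toFun (x * a) = toFun x * a

/-- A slice for the inclusion `A ⊆ B`: a closed linear subspace `M` with `A·M ⊆ M`,
`M·A ⊆ M`, `M*·M ⊆ A` and `M·M* ⊆ A`. -/
structure IsSlice (A : Set B) (M : Submodule ℂ B) : Prop where
  isClosed : IsClosed (M : Set B)
  mul_left : ∀ a ∈ A, ∀ m ∈ M, a * m ∈ M
  mul_right : ∀ a ∈ A, ∀ m ∈ M, m * a ∈ M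
  star_mul_mem : ∀ m ∈ M, ∀ n ∈ M, star m * n ∈ A
  mul_star_mem : ∀ m ∈ M, ∀ n ∈ M, m * star n ∈ A

/-- An isomorphism of Hilbert `A`-bimodules from the ideal with carrier `I` onto the
subset `M` of `B`; only the values of `toFun` on `I` are relevant. -/
structure HilbertBimoduleIso (A : Set B) (I : Set B) (M : Set B) where
  toFun : B → B
  map_add : ∀ x ∈ I, ∀ y ∈ I, toFun (x + y) = toFun x + toFun y
  map_smul : ∀ (c : ℂ), ∀ x ∈ I, toFun (c • x) = c • toFun x
  maps_into : ∀ x ∈ I, toFun x ∈ M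
  injOn : ∀ x ∈ I, ∀ y ∈ I, toFun x = toFun y → x = y
  surjOn : ∀ m ∈ M, ∃ x ∈ I, toFun x = m
  bimod : ∀ a ∈ A, ∀ b ∈ A, ∀ x ∈ I, toFun (a * x * b) = a * toFun x * b
  inner_right : ∀ x ∈ I, ∀ y ∈ I, star (toFun x) * toFun y = star x * y
  inner_left : ∀ x ∈ I, ∀ y ∈ I, toFun x * star (toFun y) = x * star y

/-- A hereditary C*-subalgebra `D` of the C*-subalgebra with carrier `A`. -/
structure IsHereditarySubalgebra (A : Set B) (D : Set B) : Prop where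
  subset : D ⊆ A
  zero_mem : (0 : B) ∈ D
  add_mem : ∀ x ∈ D, ∀ y ∈ D, x + y ∈ D
  smul_mem : ∀ (c : ℂ), ∀ x ∈ D, c • x ∈ D
  mul_mem : ∀ x ∈ D, ∀ y ∈ D, x * y ∈ D
  star_mem : ∀ x ∈ D, star x ∈ D
  isClosed : IsClosed D
  hereditary : ∀ x ∈ A, ∀ a ∈ D, 0 ≤ x → x ≤ a → x ∈ D

/-- Kishimoto's condition for an element `y ∈ B` relative to `A`. -/
def Kishimoto (A : Set B) (y : B) : Prop :=
  ∀ D : Set B, IsHereditarySubalgebra A D → D ≠ {0} → ∀ ε : ℝ, 0 < ε →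
    ∃ a ∈ D, 0 ≤ a ∧ ‖a‖ = 1 ∧ ‖a * y * a‖ < ε

/-- The inclusion `A ⊆ B` is aperiodic. -/
def AperiodicInclusion (A : Set B) : Prop :=
  ∀ b : B, ∀ D : Set B, IsHereditarySubalgebra A D → D ≠ {0} → ∀ ε : ℝ, 0 < ε →
    ∃ a ∈ D, 0 ≤ a ∧ ‖a‖ = 1 ∧ Metric.infDist (a * b * a) A < ε

/-- Every virtual commutant of `A` in `B` has range contained in `A`. -/
def VirtualCommutantsTrivial (A : Set B) : Prop :=
  ∀ I : CIdealIn A, ∀ φ : VirtualCommutant A I.carrier, ∀ x ∈ I.carrier, φ.toFun x ∈ A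

/-- For every closed two-sided ideal `I` of `A`, every multiplier of `IBI` commuting with `I`
maps `I` into `I`. -/
def CommutingMultipliersTrivial (A : Set B) : Prop :=
  ∀ I : CIdealIn A, ∀ C : NonUnitalStarSubalgebra ℂ B, (C : Set B) = IBISet I.carrier →
    ∀ τ : 𝓜(ℂ, C), (∀ x : C, (x : B) ∈ I.carrier → τ.fst x = τ.snd x) →
      ∀ x : C, (x : B) ∈ I.carrier → ((τ.fst x : C) : B) ∈ I.carrier

/-- Every slice isomorphic as a Hilbert `A`-bimodule to a closed two-sided ideal `I` of `A`
equals `I`. -/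
def SlicesIsoIdealsTrivial (A : Set B) : Prop :=
  ∀ I : CIdealIn A, ∀ M : Submodule ℂ B, IsSlice A M →
    Nonempty (HilbertBimoduleIso A I.carrier (M : Set B)) → (M : Set B) = I.carrier

/-- `E` is faithful and, for every closed two-sided ideal `I` of `A`, the restriction of `E`
to `IBI` is the only conditional expectation from `IBI` onto `I`. -/
def UniqueExpectationOnIdeals (A : Set B) (E : CondExp A) : Prop :=
  E.Faithful ∧ ∀ I : CIdealIn A,
    (∃ P : CondExpOnSub (IBISet I.carrier) I.carrier,
      ∀ x ∈ IBISet I.carrier, P.toFun x = E.toFun x) ∧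
    (∀ P : CondExpOnSub (IBISet I.carrier) I.carrier,
      ∀ x ∈ IBISet I.carrier, P.toFun x = E.toFun x)

/-- For every closed two-sided ideal `I` of `A` there is exactly one faithful conditional
expectation from `IBI` onto `I`. -/
def UniqueFaithfulExpectationOnIdeals (A : Set B) : Prop :=
  ∀ I : CIdealIn A,
    ∃ P : CondExpOnSub (IBISet I.carrier) I.carrier, P.Faithful ∧
      ∀ Q : CondExpOnSub (IBISet I.carrier) I.carrier, Q.Faithful →
        ∀ x ∈ IBISet I.carrier, Q.toFun x = P.toFun x

/-- `A ⊆ B` is a noncommutative Cartan subalgebra in the sense of Exel. -/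
def IsNCCartan (A : Set B) : Prop :=
  RegularInclusion A ∧ (∃ E : CondExp A, E.AlmostFaithful) ∧ VirtualCommutantsTrivial A

/-- `A` detects ideals in `B`. -/
def DetectsIdeals (A : Set B) : Prop :=
  ∀ J : CIdealIn (Set.univ : Set B), J.carrier ≠ {0} → J.carrier ∩ A ≠ {0}

/-- `A` supports `B`. -/
def Supports (A : Set B) : Prop :=
  ∀ b : B, 0 ≤ b → b ≠ 0 → ∃ a ∈ A, 0 ≤ a ∧ a ≠ 0 ∧
    ∀ ε : ℝ, 0 < ε → ∃ x : B, ‖star x * b * x - a‖ < ε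

/-- The C*-algebra with carrier `A` is prime: any two nonzero closed two-sided ideals have
nonzero intersection. -/
def IsPrimeCStarSet (A : Set B) : Prop :=
  ∀ I J : CIdealIn A, I.carrier ≠ {0} → J.carrier ≠ {0} → I.carrier ∩ J.carrier ≠ {0}

end NCCartan

open NCCartan

section AuxProof

variable {B : Type*} [NonUnitalCStarAlgebra B] [PartialOrder B] [StarOrderedRing B]

private lemma poly_bound (k : ℕ) {t : ℝ} (ht0 : 0 ≤ t) (ht1 : t ≤ 1) :
    ((k : ℝ) + 1) * (t * (1 - t) ^ k) ≤ 1 := by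
  induction k with
  | zero => simpa using ht1
  | succ n ih =>
    have h1t : (0:ℝ) ≤ 1 - t := by linarith
    have h2 : ((n:ℝ) + 1) * (t * (1 - t) ^ (n+1)) ≤ 1 - t := by
      calc ((n:ℝ) + 1) * (t * (1 - t) ^ (n+1)) = (1 - t) * (((n:ℝ)+1) * (t * (1-t)^n)) := by ring
        _ ≤ (1 - t) * 1 := mul_le_mul_of_nonneg_left ih h1t
        _ = 1 - t := mul_one _
    have h3 : t * (1 - t) ^ (n+1) ≤ t := by
      calc t * (1-t)^(n+1) ≤ t * 1 :=
            mul_le_mul_of_nonneg_left (pow_le_one₀ h1t (by linarith)) ht0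
        _ = t := mul_one t
    push_cast
    nlinarith [h2, h3]

private lemma cfc_identity (y : B) (hy : 0 ≤ y) (n : ℕ) :
    cfcₙ (fun t : ℝ => t * (1 - t) ^ (2*n)) y
      = y - y * cfcₙ (fun t : ℝ => 1 - (1-t)^n) y - cfcₙ (fun t : ℝ => 1 - (1-t)^n) y * y
        + cfcₙ (fun t : ℝ => 1 - (1-t)^n) y * y * cfcₙ (fun t : ℝ => 1 - (1-t)^n) y := by
  have h0 : cfcₙ (fun t : ℝ => t * (1 - t) ^ (2*n)) y
      = cfcₙ (fun t : ℝ => ((t : ℝ) - t * (1 - (1-t)^n) - (1 - (1-t)^n) * t)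
          + ((1 - (1-t)^n) * t) * (1 - (1-t)^n)) y :=
    cfcₙ_congr (fun t _ => by ring)
  rw [h0,
    cfcₙ_add (fun t : ℝ => (t : ℝ) - t * (1 - (1-t)^n) - (1 - (1-t)^n) * t)
      (fun t : ℝ => ((1 - (1-t)^n) * t) * (1 - (1-t)^n)) y (by fun_prop) (by simp)
      (by fun_prop) (by simp),
    cfcₙ_sub (fun t : ℝ => (t : ℝ) - t * (1 - (1-t)^n))
      (fun t : ℝ => (1 - (1-t)^n) * t) y (by fun_prop) (by simp) (by fun_prop) (by simp),
    cfcₙ_sub (fun t : ℝ => (t : ℝ))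
      (fun t : ℝ => t * (1 - (1-t)^n)) y (by fun_prop) (by simp) (by fun_prop) (by simp),
    cfcₙ_mul (fun t : ℝ => (t : ℝ))
      (fun t : ℝ => (1 - (1-t)^n)) y (by fun_prop) (by simp) (by fun_prop) (by simp),
    cfcₙ_mul (fun t : ℝ => ((1 - (1-t)^n) * t))
      (fun t : ℝ => (1 - (1-t)^n)) y (by fun_prop) (by simp) (by fun_prop) (by simp),
    cfcₙ_mul (fun t : ℝ => (1 - (1-t)^n))
      (fun t : ℝ => (t : ℝ)) y (by fun_prop) (by simp) (by fun_prop) (by simp),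
    cfcₙ_id' ℝ y]

private lemma approx_lemma (m : B) (S : Submodule ℂ B)
    (hxS : star m * m ∈ S) (hmul : ∀ s ∈ S, (star m * m) * s ∈ S)
    {ε : ℝ} (hε : 0 < ε) :
    ∃ e ∈ S, star e = e ∧ ‖e‖ ≤ 1 ∧ ‖m - m * e‖ < ε := by
  rcases eq_or_ne m 0 with rfl | hm
  · exact ⟨0, S.zero_mem, by simp, by simp, by simpa using hε⟩
  set c : ℝ := ‖star m * m‖ with hc_def
  have hc : (0:ℝ) < c := by
    rw [hc_def, CStarRing.norm_star_mul_self]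
    have : 0 < ‖m‖ := norm_pos_iff.mpr hm
    positivity
  set y : B := (c⁻¹ : ℂ) • (star m * m) with hy_def
  have hxy : star m * m = (c : ℂ) • y := by
    rw [hy_def, smul_smul, mul_inv_cancel₀ (by exact_mod_cast hc.ne'), one_smul]
  have hyS : y ∈ S := S.smul_mem _ hxS
  have hy0 : (0:B) ≤ y := by
    have h' : y = (c⁻¹ : ℝ) • (star m * m) := by
      rw [hy_def, ← algebraMap_smul ℂ (c⁻¹ : ℝ) (star m * m)]
      norm_num
    rw [h']
    exact smul_nonneg (by positivity) (star_mul_self_nonneg m)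
  have hy1 : ‖y‖ ≤ 1 := by
    rw [hy_def, norm_smul]
    simp only [norm_inv, Complex.norm_real]
    rw [Real.norm_eq_abs, abs_of_pos hc, ← hc_def, inv_mul_cancel₀ hc.ne']
  -- the approximating sequence
  have hy_sa : IsSelfAdjoint y := IsSelfAdjoint.of_nonneg hy0
  set e : ℕ → B := fun n => cfcₙ (fun t : ℝ => 1 - (1-t)^n) y with he_def
  have he_sa : ∀ n, IsSelfAdjoint (e n) := fun n => cfcₙ_predicate _ y
  have he_zero : e 0 = 0 := by
    rw [he_def]
    simp
  have he_succ : ∀ n, e (n+1) = y + e n - y * e n := by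
    intro n
    have h1 : e (n+1) = cfcₙ (fun t : ℝ => (t + (1 - (1-t)^n)) - t * (1 - (1-t)^n)) y :=
      cfcₙ_congr (fun t _ => by ring)
    rw [h1, cfcₙ_sub _ _ y (by fun_prop) (by simp) (by fun_prop) (by simp),
      cfcₙ_add _ _ y (by fun_prop) (by simp) (by fun_prop) (by simp),
      cfcₙ_mul _ _ y (by fun_prop) (by simp) (by fun_prop) (by simp), cfcₙ_id' ℝ y]
  have heS : ∀ n, e n ∈ S := by
    intro n
    induction n with
    | zero => rw [he_zero]; exact S.zero_mem
    | succ k ih =>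
      rw [he_succ k]
      have h1 : y * e k ∈ S := by
        have h2 : ((c:ℂ)) • (y * e k) ∈ S := by
          have := hmul (e k) ih
          rwa [hxy, smul_mul_assoc] at this
        have h3 : y * e k = ((c:ℂ))⁻¹ • ((c:ℂ) • (y * e k)) := by
          rw [smul_smul, inv_mul_cancel₀ (by exact_mod_cast hc.ne'), one_smul]
        rw [h3]; exact S.smul_mem _ h2
      exact S.sub_mem (S.add_mem hyS ih) h1
  -- quasispectrum bounds
  have hspec : ∀ t ∈ quasispectrum ℝ y, 0 ≤ t ∧ t ≤ 1 := by
    intro t ht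
    refine ⟨quasispectrum_nonneg_of_nonneg y hy0 t ht, ?_⟩
    have h2 : ‖t‖ ≤ ‖y‖ := by
      rw [Unitization.quasispectrum_eq_spectrum_inr' ℝ ℂ] at ht
      simpa [Unitization.norm_inr] using spectrum.norm_le_norm_of_mem ht
    rw [Real.norm_eq_abs] at h2
    calc t ≤ |t| := le_abs_self t
      _ ≤ ‖y‖ := h2
      _ ≤ 1 := hy1
  have he_norm : ∀ n, ‖e n‖ ≤ 1 := by
    intro n
    refine norm_cfcₙ_le fun t ht => ?_
    obtain ⟨ht0, ht1⟩ := hspec t ht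
    rw [Real.norm_eq_abs, abs_le]
    have h1 : (0:ℝ) ≤ (1-t)^n := pow_nonneg (by linarith) n
    have h2 : (1-t)^n ≤ 1 := pow_le_one₀ (by linarith) (by linarith)
    constructor <;> linarith
  -- the key estimate
  have hkey : ∀ n, ‖m - m * e n‖^2 ≤ c / (2*(n:ℝ)+1) := by
    intro n
    have h2 : star (m - m * e n) * (m - m * e n)
        = star m * m - (star m * m) * e n - e n * (star m * m) + e n * (star m * m) * e n := by
      rw [star_sub, star_mul, (he_sa n).star_eq]; noncomm_ring
    have h3 : star (m - m * e n) * (m - m * e n)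
        = (c : ℂ) • cfcₙ (fun t : ℝ => t * (1 - t) ^ (2*n)) y := by
      rw [h2, cfc_identity y hy0 n, hxy]
      simp only [smul_mul_assoc, mul_smul_comm, smul_sub, smul_add]
      rfl
    have h4 : ‖m - m * e n‖^2 = ‖star (m - m * e n) * (m - m * e n)‖ := by
      rw [CStarRing.norm_star_mul_self, sq]
    rw [h4, h3, norm_smul, Complex.norm_real, Real.norm_eq_abs, abs_of_pos hc]
    have h5 : ‖cfcₙ (fun t : ℝ => t * (1 - t) ^ (2*n)) y‖ ≤ 1 / (2*(n:ℝ)+1) := by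
      refine norm_cfcₙ_le fun t ht => ?_
      obtain ⟨ht0, ht1⟩ := hspec t ht
      have h1t : (0:ℝ) ≤ 1 - t := by linarith
      have hb := poly_bound (2*n) ht0 ht1
      rw [Real.norm_eq_abs, abs_of_nonneg (by positivity)]
      rw [le_div_iff₀ (by positivity), mul_comm]
      calc (2*(n:ℝ)+1) * (t * (1-t)^(2*n)) = (((2*n : ℕ) : ℝ) + 1) * (t * (1-t)^(2*n)) := by
            push_cast; ring
        _ ≤ 1 := hb
    calc c * ‖cfcₙ (fun t : ℝ => t * (1 - t) ^ (2*n)) y‖ ≤ c * (1 / (2*(n:ℝ)+1)) :=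
          mul_le_mul_of_nonneg_left h5 hc.le
      _ = c / (2*(n:ℝ)+1) := by ring
  -- choose n large
  obtain ⟨n, hn⟩ := exists_nat_gt (c / ε^2)
  have hn' : c / (2*(n:ℝ)+1) < ε^2 := by
    rw [div_lt_iff₀ (by positivity)]
    rw [div_lt_iff₀ (by positivity)] at hn
    nlinarith [hn, sq_nonneg ε]
  refine ⟨e n, heS n, (he_sa n).star_eq, he_norm n, ?_⟩
  have := lt_of_le_of_lt (hkey n) hn'
  have hnn : (0:ℝ) ≤ ‖m - m * e n‖ := norm_nonneg _
  nlinarith [this, hnn, hε]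


end AuxProof

/-- (From the proof of Proposition 3.9.) A slice `M` is contained in `A` if and only if the
closed linear span of `M·M` equals `M`; in that case `M* = M` and `M` is a closed two-sided
ideal of `A`. -/
theorem statement_17 {B : Type*} [NonUnitalCStarAlgebra B] [PartialOrder B] [StarOrderedRing B]
    (A : NonUnitalStarSubalgebra ℂ B) [IsClosed (A : Set B)]
    (hnd : Nondegenerate (A : Set B))
    (M : Submodule ℂ B) (hM : IsSlice (A : Set B) M)
    (MM : Set B)
    (hMM : MM = closure ((Submodule.span ℂ
      {z : B | ∃ m ∈ M, ∃ n ∈ M, z = m * n} : Submodule ℂ B) : Set B)) :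
    ((M : Set B) ⊆ (A : Set B) ↔ MM = (M : Set B)) ∧
    (MM = (M : Set B) →
      ((fun m : B => star m) '' (M : Set B) = (M : Set B)) ∧
      ∃ I : CIdealIn (A : Set B), I.carrier = (M : Set B)) := by
  set T : Set B := {z : B | ∃ m ∈ M, ∃ n ∈ M, z = m * n} with hT_def
  set S : Submodule ℂ B := M ⊓ A.toNonUnitalSubalgebra.toSubmodule with hS_def
  have hS_mem : ∀ z : B, z ∈ S ↔ z ∈ M ∧ z ∈ A := by
    intro z
    rw [hS_def, Submodule.mem_inf]
    rfl
  -- the S-multiplication property, for any x ∈ A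
  have hS_mul : ∀ x : B, x ∈ (A : Set B) → ∀ s ∈ S, x * s ∈ S := by
    intro x hxA s hs
    rw [hS_mem] at hs ⊢
    exact ⟨hM.mul_left x hxA s hs.1, mul_mem hxA hs.2⟩
  -- Forward direction : M ⊆ A → MM = M
  have hfwd : (M : Set B) ⊆ (A : Set B) → MM = (M : Set B) := by
    intro hMA
    apply Set.Subset.antisymm
    · rw [hMM]
      refine closure_minimal ?_ hM.isClosed
      refine Submodule.span_le.mpr ?_
      rintro z ⟨p, hp, q, hq, rfl⟩
      exact hM.mul_left p (hMA hp) q hq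
    · intro m hm
      rw [hMM]
      rw [Metric.mem_closure_iff]
      intro ε hε
      have hxM : star m * m ∈ M := hM.mul_left (star m) (star_mem (hMA hm)) m hm
      have hxA : star m * m ∈ (A : Set B) := mul_mem (star_mem (hMA hm)) (hMA hm)
      have hxS : star m * m ∈ S := (hS_mem _).mpr ⟨hxM, hxA⟩
      obtain ⟨e, heS, he_star, he_norm, he⟩ :=
        approx_lemma m S hxS (hS_mul _ hxA) (half_pos hε)
      obtain ⟨heM, heA⟩ := (hS_mem e).mp heS
      refine ⟨m * e * e, ?_, ?_⟩
      · apply Submodule.subset_span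
        exact ⟨m * e, hM.mul_right e heA m hm, e, heM, rfl⟩
      · rw [dist_eq_norm]
        have hre : m - m * e * e = (m - m * e) + (m - m * e) * e := by noncomm_ring
        calc ‖m - m * e * e‖ = ‖(m - m * e) + (m - m * e) * e‖ := by rw [hre]
          _ ≤ ‖m - m * e‖ + ‖(m - m * e) * e‖ := norm_add_le _ _
          _ ≤ ‖m - m * e‖ + ‖m - m * e‖ * ‖e‖ := by
              gcongr
              exact norm_mul_le _ _
          _ ≤ ‖m - m * e‖ + ‖m - m * e‖ * 1 := by gcongr
          _ = 2 * ‖m - m * e‖ := by ring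
          _ < 2 * (ε / 2) := by linarith
          _ = ε := by ring
  -- Backward direction : MM = M → M ⊆ A
  have hbwd : MM = (M : Set B) → (M : Set B) ⊆ (A : Set B) := by
    intro hEq m hm
    -- step A : m * star m ∈ M
    have hstep : m * star m ∈ M := by
      have hmMM : m ∈ MM := by rw [hEq]; exact hm
      rw [hMM] at hmMM
      have hmt : ((ContinuousLinearMap.mul ℂ B).flip (star m)) m ∈ closure (M : Set B) := by
        refine map_mem_closure (ContinuousLinearMap.continuous _) hmMM ?_
        intro z hz
        simp only [ContinuousLinearMap.flip_apply, ContinuousLinearMap.mul_apply']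
        show z * star m ∈ M
        induction hz using Submodule.span_induction with
        | mem x hx =>
          obtain ⟨p, hp, q, hq, rfl⟩ := hx
          rw [mul_assoc]
          exact hM.mul_right (q * star m) (hM.mul_star_mem q hq m hm) p hp
        | zero => simp
        | add x y _ _ hx hy => rw [add_mul]; exact M.add_mem hx hy
        | smul c x _ hx => rw [smul_mul_assoc]; exact M.smul_mem c hx
      rw [hM.isClosed.closure_eq] at hmt
      simpa using hmt
    -- step B : star m ∈ A
    have hxA : m * star m ∈ (A : Set B) := hM.mul_star_mem m hm m hm
    have hxS : star (star m) * star m ∈ S := by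
      rw [star_star]
      exact (hS_mem _).mpr ⟨hstep, hxA⟩
    have hsm : star m ∈ (A : Set B) := by
      have hclosed : closure (A : Set B) = (A : Set B) :=
        (‹IsClosed (A : Set B)›).closure_eq
      rw [← hclosed, Metric.mem_closure_iff]
      intro ε hε
      have hmul' : ∀ s ∈ S, (star (star m) * star m) * s ∈ S := by
        rw [star_star]; exact hS_mul _ hxA
      obtain ⟨e, heS, he_star, he_norm, he⟩ := approx_lemma (star m) S hxS hmul' hε
      obtain ⟨heM, heA⟩ := (hS_mem e).mp heS
      exact ⟨star m * e, hM.star_mul_mem m hm e heM, by rwa [dist_eq_norm]⟩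
    have hsm' : star m ∈ A := hsm
    have := star_mem hsm'
    rwa [star_star] at this
  refine ⟨⟨hfwd, hbwd⟩, ?_⟩
  intro hEq
  have hMA := hbwd hEq
  -- star-invariance
  have hstar : ∀ m ∈ M, star m ∈ M := by
    intro m hm
    have hxM : star m * m ∈ M := hM.mul_left (star m) (star_mem (hMA hm)) m hm
    have hxA : star m * m ∈ (A : Set B) := mul_mem (star_mem (hMA hm)) (hMA hm)
    have hxS : star m * m ∈ S := (hS_mem _).mpr ⟨hxM, hxA⟩
    have hmem : star m ∈ closure (M : Set B) := by
      rw [Metric.mem_closure_iff]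
      intro ε hε
      obtain ⟨e, heS, he_star, he_norm, he⟩ := approx_lemma m S hxS (hS_mul _ hxA) hε
      obtain ⟨heM, heA⟩ := (hS_mem e).mp heS
      refine ⟨e * star m, hM.mul_right (star m) (star_mem (hMA hm)) e heM, ?_⟩
      rw [dist_eq_norm]
      have : star m - e * star m = star (m - m * e) := by
        rw [star_sub, star_mul, he_star]
      rw [this, norm_star]
      exact he
    rwa [hM.isClosed.closure_eq] at hmem
  constructor
  · apply Set.Subset.antisymm
    · rintro z ⟨w, hw, rfl⟩
      exact hstar w hw
    · intro z hz
      exact ⟨star z, hstar z hz, star_star z⟩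
  · exact ⟨⟨(M : Set B), hMA, M.zero_mem,
      fun x hx y hy => M.add_mem hx hy,
      fun c x hx => M.smul_mem c hx,
      fun a ha x hx => hM.mul_left a ha x hx,
      fun a ha x hx => hM.mul_right a ha x hx,
      hM.isClosed⟩, rfl⟩
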